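/- In the two-arc solution with an interior boundary condition p(t^{m₁}) = L₁ at an interior time t⁰ < t^{m₁} < t^{m₂}, the 9×9 linear system (given in eq. (24) of the paper) relating the constants of integration (a,b,c,d) of the first arc, (g,h,q,w) of the second arc, and the jump multiplier π₀ — imposing initial conditions v(t⁰), p(t⁰), interior position condition on both arcs at t^{m₁}, continuity of velocity at t^{m₁}, final position and transversality λᵛ(t^{m₂}) = 0, continuity of λᵛ at t^{m₁}, and the jump λᵖ⁻ = λᵖ⁺ + π₀ — has a unique solution; i.e., the 9×9 coefficient matrix is invertible for any t⁰ < t^{m₁} < t^{m₂}. -/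

import Mathlib

set_option maxHeartbeats 1000000
set_option maxRecDepth 100000

/-- The 9×9 coefficient matrix of the two-arc linear system
(eq. (24)) — relating the constants of integration `(a,b,c,d)` of the first
arc, `(g,h,q,w)` of the second arc, and the jump multiplier `π₀` — is
invertible for any `t⁰ < t^{m₁} < t^{m₂}`. -/
theorem interior_constraint_matrix_invertible
    (t0 tm1 tm2 : ℝ) (h01 : t0 < tm1) (h12 : tm1 < tm2) :
    (Matrix.det
      !![t0^2/2,  t0,     1,   0,  0,        0,        0,    0, 0;
         t0^3/6,  t0^2/2, t0,  1,  0,        0,        0,    0, 0;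
         tm1^3/6, tm1^2/2, tm1, 1, 0,        0,        0,    0, 0;
         tm1^2/2, tm1,    1,   0,  -tm1^2/2, -tm1,     -1,   0, 0;
         0,       0,      0,   0,  tm2^3/6,  tm2^2/2,  tm2,  1, 0;
         0,       0,      0,   0,  -tm2,     -1,       0,    0, 0;
         0,       0,      0,   0,  tm1^3/6,  tm1^2/2,  tm1,  1, 0;
         tm1,     1,      0,   0,  -tm1,     -1,       0,    0, 0;
         1,       0,      0,   0,  -1,       0,        0,    0, -1] : ℝ) ≠ 0 := by
  intro hdet
  obtain ⟨v, hv0, hv⟩ := Matrix.exists_mulVec_eq_zero_iff.mpr hdet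
  have hD : (-(1/36) * (tm1 - t0)^3 * (tm2 - tm1)^2 * ((tm2 - tm1) + 3*(tm2 - t0)) : ℝ) ≠ 0 := by
    have h1 : (0:ℝ) < tm1 - t0 := by linarith
    have h2 : (0:ℝ) < tm2 - tm1 := by linarith
    have h4 : (0:ℝ) < (tm2 - tm1) + 3*(tm2 - t0) := by linarith
    have := mul_pos (mul_pos (pow_pos h1 3) (pow_pos h2 2)) h4
    intro h; nlinarith
  simp only [Matrix.cons_mulVec, Matrix.cons_dotProduct, Matrix.dotProduct_of_isEmpty,
    Matrix.empty_mulVec, Matrix.cons_eq_zero_iff] at hv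
  obtain ⟨e0, e1, e2, e3, e4, e5, e6, e7, e8, -⟩ := hv
  have h0 : Matrix.vecHead v = 0 := by
    have key : (-(1/36) * (tm1 - t0)^3 * (tm2 - tm1)^2 * ((tm2 - tm1) + 3*(tm2 - t0)) : ℝ) * (Matrix.vecHead v) = 0 := by
      linear_combination ((-1/3 : ℝ)*tm1*tm2^3 + (1/2 : ℝ)*tm1^2*tm2^2 + (-1/6 : ℝ)*tm1^4 + (1/3 : ℝ)*t0*tm2^3 + (-1/1 : ℝ)*t0*tm1^2*tm2 + (2/3 : ℝ)*t0*tm1^3 + (-1/2 : ℝ)*t0^2*tm2^2 + (1/1 : ℝ)*t0^2*tm1*tm2 + (-1/2 : ℝ)*t0^2*tm1^2) * e0 +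
      ((-1/3 : ℝ)*tm2^3 + (1/1 : ℝ)*tm1^2*tm2 + (-2/3 : ℝ)*tm1^3 + (1/1 : ℝ)*t0*tm2^2 + (-2/1 : ℝ)*t0*tm1*tm2 + (1/1 : ℝ)*t0*tm1^2) * e1 +
      ((1/3 : ℝ)*tm2^3 + (-1/1 : ℝ)*tm1^2*tm2 + (2/3 : ℝ)*tm1^3 + (-1/1 : ℝ)*t0*tm2^2 + (2/1 : ℝ)*t0*tm1*tm2 + (-1/1 : ℝ)*t0*tm1^2) * e2 +
      ((-1/2 : ℝ)*tm1^2*tm2^2 + (1/1 : ℝ)*tm1^3*tm2 + (-1/2 : ℝ)*tm1^4 + (1/1 : ℝ)*t0*tm1*tm2^2 + (-2/1 : ℝ)*t0*tm1^2*tm2 + (1/1 : ℝ)*t0*tm1^3 + (-1/2 : ℝ)*t0^2*tm2^2 + (1/1 : ℝ)*t0^2*tm1*tm2 + (-1/2 : ℝ)*t0^2*tm1^2) * e3 +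
      ((-1/2 : ℝ)*tm1^2*tm2 + (1/2 : ℝ)*tm1^3 + (1/1 : ℝ)*t0*tm1*tm2 + (-1/1 : ℝ)*t0*tm1^2 + (-1/2 : ℝ)*t0^2*tm2 + (1/2 : ℝ)*t0^2*tm1) * e4 +
      ((-1/12 : ℝ)*tm1^2*tm2^3 + (1/4 : ℝ)*tm1^3*tm2^2 + (-1/4 : ℝ)*tm1^4*tm2 + (1/12 : ℝ)*tm1^5 + (1/6 : ℝ)*t0*tm1*tm2^3 + (-1/2 : ℝ)*t0*tm1^2*tm2^2 + (1/2 : ℝ)*t0*tm1^3*tm2 + (-1/6 : ℝ)*t0*tm1^4 + (-1/12 : ℝ)*t0^2*tm2^3 + (1/4 : ℝ)*t0^2*tm1*tm2^2 + (-1/4 : ℝ)*t0^2*tm1^2*tm2 + (1/12 : ℝ)*t0^2*tm1^3) * e5 +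
      ((1/2 : ℝ)*tm1^2*tm2 + (-1/2 : ℝ)*tm1^3 + (-1/1 : ℝ)*t0*tm1*tm2 + (1/1 : ℝ)*t0*tm1^2 + (1/2 : ℝ)*t0^2*tm2 + (-1/2 : ℝ)*t0^2*tm1) * e6 +
      ((-1/6 : ℝ)*tm1^2*tm2^3 + (1/2 : ℝ)*tm1^3*tm2^2 + (-1/2 : ℝ)*tm1^4*tm2 + (1/6 : ℝ)*tm1^5 + (1/3 : ℝ)*t0*tm1*tm2^3 + (-1/1 : ℝ)*t0*tm1^2*tm2^2 + (1/1 : ℝ)*t0*tm1^3*tm2 + (-1/3 : ℝ)*t0*tm1^4 + (-1/6 : ℝ)*t0^2*tm2^3 + (1/2 : ℝ)*t0^2*tm1*tm2^2 + (-1/2 : ℝ)*t0^2*tm1^2*tm2 + (1/6 : ℝ)*t0^2*tm1^3) * e7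
    exact (mul_eq_zero.mp key).resolve_left hD
  have h1 : Matrix.vecHead (Matrix.vecTail v) = 0 := by
    have key : (-(1/36) * (tm1 - t0)^3 * (tm2 - tm1)^2 * ((tm2 - tm1) + 3*(tm2 - t0)) : ℝ) * (Matrix.vecHead (Matrix.vecTail v)) = 0 := by
      linear_combination ((1/3 : ℝ)*tm1^2*tm2^3 + (-2/3 : ℝ)*tm1^3*tm2^2 + (1/3 : ℝ)*tm1^4*tm2 + (-1/3 : ℝ)*t0*tm1*tm2^3 + (1/2 : ℝ)*t0*tm1^2*tm2^2 + (-1/6 : ℝ)*t0*tm1^4 + (1/6 : ℝ)*t0^3*tm2^2 + (-1/3 : ℝ)*t0^3*tm1*tm2 + (1/6 : ℝ)*t0^3*tm1^2) * e0 +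
      ((1/3 : ℝ)*tm1*tm2^3 + (-1/2 : ℝ)*tm1^2*tm2^2 + (1/6 : ℝ)*tm1^4 + (-1/2 : ℝ)*t0^2*tm2^2 + (1/1 : ℝ)*t0^2*tm1*tm2 + (-1/2 : ℝ)*t0^2*tm1^2) * e1 +
      ((-1/3 : ℝ)*tm1*tm2^3 + (1/2 : ℝ)*tm1^2*tm2^2 + (-1/6 : ℝ)*tm1^4 + (1/2 : ℝ)*t0^2*tm2^2 + (-1/1 : ℝ)*t0^2*tm1*tm2 + (1/2 : ℝ)*t0^2*tm1^2) * e2 +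
      ((1/6 : ℝ)*tm1^3*tm2^2 + (-1/3 : ℝ)*tm1^4*tm2 + (1/6 : ℝ)*tm1^5 + (-1/2 : ℝ)*t0^2*tm1*tm2^2 + (1/1 : ℝ)*t0^2*tm1^2*tm2 + (-1/2 : ℝ)*t0^2*tm1^3 + (1/3 : ℝ)*t0^3*tm2^2 + (-2/3 : ℝ)*t0^3*tm1*tm2 + (1/3 : ℝ)*t0^3*tm1^2) * e3 +
      ((1/6 : ℝ)*tm1^3*tm2 + (-1/6 : ℝ)*tm1^4 + (-1/2 : ℝ)*t0^2*tm1*tm2 + (1/2 : ℝ)*t0^2*tm1^2 + (1/3 : ℝ)*t0^3*tm2 + (-1/3 : ℝ)*t0^3*tm1) * e4 +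
      ((1/36 : ℝ)*tm1^3*tm2^3 + (-1/12 : ℝ)*tm1^4*tm2^2 + (1/12 : ℝ)*tm1^5*tm2 + (-1/36 : ℝ)*tm1^6 + (-1/12 : ℝ)*t0^2*tm1*tm2^3 + (1/4 : ℝ)*t0^2*tm1^2*tm2^2 + (-1/4 : ℝ)*t0^2*tm1^3*tm2 + (1/12 : ℝ)*t0^2*tm1^4 + (1/18 : ℝ)*t0^3*tm2^3 + (-1/6 : ℝ)*t0^3*tm1*tm2^2 + (1/6 : ℝ)*t0^3*tm1^2*tm2 + (-1/18 : ℝ)*t0^3*tm1^3) * e5 +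
      ((-1/6 : ℝ)*tm1^3*tm2 + (1/6 : ℝ)*tm1^4 + (1/2 : ℝ)*t0^2*tm1*tm2 + (-1/2 : ℝ)*t0^2*tm1^2 + (-1/3 : ℝ)*t0^3*tm2 + (1/3 : ℝ)*t0^3*tm1) * e6 +
      ((1/18 : ℝ)*tm1^3*tm2^3 + (-1/6 : ℝ)*tm1^4*tm2^2 + (1/6 : ℝ)*tm1^5*tm2 + (-1/18 : ℝ)*tm1^6 + (-1/6 : ℝ)*t0^2*tm1*tm2^3 + (1/2 : ℝ)*t0^2*tm1^2*tm2^2 + (-1/2 : ℝ)*t0^2*tm1^3*tm2 + (1/6 : ℝ)*t0^2*tm1^4 + (1/9 : ℝ)*t0^3*tm2^3 + (-1/3 : ℝ)*t0^3*tm1*tm2^2 + (1/3 : ℝ)*t0^3*tm1^2*tm2 + (-1/9 : ℝ)*t0^3*tm1^3) * e7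
    exact (mul_eq_zero.mp key).resolve_left hD
  have h2 : Matrix.vecHead (Matrix.vecTail (Matrix.vecTail v)) = 0 := by
    have key : (-(1/36) * (tm1 - t0)^3 * (tm2 - tm1)^2 * ((tm2 - tm1) + 3*(tm2 - t0)) : ℝ) * (Matrix.vecHead (Matrix.vecTail (Matrix.vecTail v))) = 0 := by
      linear_combination ((-1/9 : ℝ)*tm1^3*tm2^3 + (1/4 : ℝ)*tm1^4*tm2^2 + (-1/6 : ℝ)*tm1^5*tm2 + (1/36 : ℝ)*tm1^6 + (1/6 : ℝ)*t0^2*tm1*tm2^3 + (-1/4 : ℝ)*t0^2*tm1^2*tm2^2 + (1/12 : ℝ)*t0^2*tm1^4 + (-1/18 : ℝ)*t0^3*tm2^3 + (1/6 : ℝ)*t0^3*tm1^2*tm2 + (-1/9 : ℝ)*t0^3*tm1^3) * e0 +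
      ((-1/3 : ℝ)*t0*tm1*tm2^3 + (1/2 : ℝ)*t0*tm1^2*tm2^2 + (-1/6 : ℝ)*t0*tm1^4 + (1/6 : ℝ)*t0^2*tm2^3 + (-1/2 : ℝ)*t0^2*tm1^2*tm2 + (1/3 : ℝ)*t0^2*tm1^3) * e1 +
      ((1/3 : ℝ)*t0*tm1*tm2^3 + (-1/2 : ℝ)*t0*tm1^2*tm2^2 + (1/6 : ℝ)*t0*tm1^4 + (-1/6 : ℝ)*t0^2*tm2^3 + (1/2 : ℝ)*t0^2*tm1^2*tm2 + (-1/3 : ℝ)*t0^2*tm1^3) * e2 +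
      ((-1/6 : ℝ)*t0*tm1^3*tm2^2 + (1/3 : ℝ)*t0*tm1^4*tm2 + (-1/6 : ℝ)*t0*tm1^5 + (1/4 : ℝ)*t0^2*tm1^2*tm2^2 + (-1/2 : ℝ)*t0^2*tm1^3*tm2 + (1/4 : ℝ)*t0^2*tm1^4 + (-1/12 : ℝ)*t0^4*tm2^2 + (1/6 : ℝ)*t0^4*tm1*tm2 + (-1/12 : ℝ)*t0^4*tm1^2) * e3 +
      ((-1/6 : ℝ)*t0*tm1^3*tm2 + (1/6 : ℝ)*t0*tm1^4 + (1/4 : ℝ)*t0^2*tm1^2*tm2 + (-1/4 : ℝ)*t0^2*tm1^3 + (-1/12 : ℝ)*t0^4*tm2 + (1/12 : ℝ)*t0^4*tm1) * e4 +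
      ((-1/36 : ℝ)*t0*tm1^3*tm2^3 + (1/12 : ℝ)*t0*tm1^4*tm2^2 + (-1/12 : ℝ)*t0*tm1^5*tm2 + (1/36 : ℝ)*t0*tm1^6 + (1/24 : ℝ)*t0^2*tm1^2*tm2^3 + (-1/8 : ℝ)*t0^2*tm1^3*tm2^2 + (1/8 : ℝ)*t0^2*tm1^4*tm2 + (-1/24 : ℝ)*t0^2*tm1^5 + (-1/72 : ℝ)*t0^4*tm2^3 + (1/24 : ℝ)*t0^4*tm1*tm2^2 + (-1/24 : ℝ)*t0^4*tm1^2*tm2 + (1/72 : ℝ)*t0^4*tm1^3) * e5 +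
      ((1/6 : ℝ)*t0*tm1^3*tm2 + (-1/6 : ℝ)*t0*tm1^4 + (-1/4 : ℝ)*t0^2*tm1^2*tm2 + (1/4 : ℝ)*t0^2*tm1^3 + (1/12 : ℝ)*t0^4*tm2 + (-1/12 : ℝ)*t0^4*tm1) * e6 +
      ((-1/18 : ℝ)*t0*tm1^3*tm2^3 + (1/6 : ℝ)*t0*tm1^4*tm2^2 + (-1/6 : ℝ)*t0*tm1^5*tm2 + (1/18 : ℝ)*t0*tm1^6 + (1/12 : ℝ)*t0^2*tm1^2*tm2^3 + (-1/4 : ℝ)*t0^2*tm1^3*tm2^2 + (1/4 : ℝ)*t0^2*tm1^4*tm2 + (-1/12 : ℝ)*t0^2*tm1^5 + (-1/36 : ℝ)*t0^4*tm2^3 + (1/12 : ℝ)*t0^4*tm1*tm2^2 + (-1/12 : ℝ)*t0^4*tm1^2*tm2 + (1/36 : ℝ)*t0^4*tm1^3) * e7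
    exact (mul_eq_zero.mp key).resolve_left hD
  have h3 : Matrix.vecHead (Matrix.vecTail (Matrix.vecTail (Matrix.vecTail v))) = 0 := by
    have key : (-(1/36) * (tm1 - t0)^3 * (tm2 - tm1)^2 * ((tm2 - tm1) + 3*(tm2 - t0)) : ℝ) * (Matrix.vecHead (Matrix.vecTail (Matrix.vecTail (Matrix.vecTail v)))) = 0 := by
      linear_combination ((1/9 : ℝ)*t0*tm1^3*tm2^3 + (-1/4 : ℝ)*t0*tm1^4*tm2^2 + (1/6 : ℝ)*t0*tm1^5*tm2 + (-1/36 : ℝ)*t0*tm1^6 + (-1/6 : ℝ)*t0^2*tm1^2*tm2^3 + (1/3 : ℝ)*t0^2*tm1^3*tm2^2 + (-1/6 : ℝ)*t0^2*tm1^4*tm2 + (1/18 : ℝ)*t0^3*tm1*tm2^3 + (-1/12 : ℝ)*t0^3*tm1^2*tm2^2 + (1/36 : ℝ)*t0^3*tm1^4) * e0 +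
      ((-1/9 : ℝ)*tm1^3*tm2^3 + (1/4 : ℝ)*tm1^4*tm2^2 + (-1/6 : ℝ)*tm1^5*tm2 + (1/36 : ℝ)*tm1^6 + (1/3 : ℝ)*t0*tm1^2*tm2^3 + (-2/3 : ℝ)*t0*tm1^3*tm2^2 + (1/3 : ℝ)*t0*tm1^4*tm2 + (-1/6 : ℝ)*t0^2*tm1*tm2^3 + (1/4 : ℝ)*t0^2*tm1^2*tm2^2 + (-1/12 : ℝ)*t0^2*tm1^4) * e1 +
      ((-1/6 : ℝ)*t0^2*tm1*tm2^3 + (1/4 : ℝ)*t0^2*tm1^2*tm2^2 + (-1/12 : ℝ)*t0^2*tm1^4 + (1/9 : ℝ)*t0^3*tm2^3 + (-1/3 : ℝ)*t0^3*tm1^2*tm2 + (2/9 : ℝ)*t0^3*tm1^3 + (-1/12 : ℝ)*t0^4*tm2^2 + (1/6 : ℝ)*t0^4*tm1*tm2 + (-1/12 : ℝ)*t0^4*tm1^2) * e2 +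
      ((1/12 : ℝ)*t0^2*tm1^3*tm2^2 + (-1/6 : ℝ)*t0^2*tm1^4*tm2 + (1/12 : ℝ)*t0^2*tm1^5 + (-1/6 : ℝ)*t0^3*tm1^2*tm2^2 + (1/3 : ℝ)*t0^3*tm1^3*tm2 + (-1/6 : ℝ)*t0^3*tm1^4 + (1/12 : ℝ)*t0^4*tm1*tm2^2 + (-1/6 : ℝ)*t0^4*tm1^2*tm2 + (1/12 : ℝ)*t0^4*tm1^3) * e3 +
      ((1/12 : ℝ)*t0^2*tm1^3*tm2 + (-1/12 : ℝ)*t0^2*tm1^4 + (-1/6 : ℝ)*t0^3*tm1^2*tm2 + (1/6 : ℝ)*t0^3*tm1^3 + (1/12 : ℝ)*t0^4*tm1*tm2 + (-1/12 : ℝ)*t0^4*tm1^2) * e4 +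
      ((1/72 : ℝ)*t0^2*tm1^3*tm2^3 + (-1/24 : ℝ)*t0^2*tm1^4*tm2^2 + (1/24 : ℝ)*t0^2*tm1^5*tm2 + (-1/72 : ℝ)*t0^2*tm1^6 + (-1/36 : ℝ)*t0^3*tm1^2*tm2^3 + (1/12 : ℝ)*t0^3*tm1^3*tm2^2 + (-1/12 : ℝ)*t0^3*tm1^4*tm2 + (1/36 : ℝ)*t0^3*tm1^5 + (1/72 : ℝ)*t0^4*tm1*tm2^3 + (-1/24 : ℝ)*t0^4*tm1^2*tm2^2 + (1/24 : ℝ)*t0^4*tm1^3*tm2 + (-1/72 : ℝ)*t0^4*tm1^4) * e5 +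
      ((-1/12 : ℝ)*t0^2*tm1^3*tm2 + (1/12 : ℝ)*t0^2*tm1^4 + (1/6 : ℝ)*t0^3*tm1^2*tm2 + (-1/6 : ℝ)*t0^3*tm1^3 + (-1/12 : ℝ)*t0^4*tm1*tm2 + (1/12 : ℝ)*t0^4*tm1^2) * e6 +
      ((1/36 : ℝ)*t0^2*tm1^3*tm2^3 + (-1/12 : ℝ)*t0^2*tm1^4*tm2^2 + (1/12 : ℝ)*t0^2*tm1^5*tm2 + (-1/36 : ℝ)*t0^2*tm1^6 + (-1/18 : ℝ)*t0^3*tm1^2*tm2^3 + (1/6 : ℝ)*t0^3*tm1^3*tm2^2 + (-1/6 : ℝ)*t0^3*tm1^4*tm2 + (1/18 : ℝ)*t0^3*tm1^5 + (1/36 : ℝ)*t0^4*tm1*tm2^3 + (-1/12 : ℝ)*t0^4*tm1^2*tm2^2 + (1/12 : ℝ)*t0^4*tm1^3*tm2 + (-1/36 : ℝ)*t0^4*tm1^4) * e7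
    exact (mul_eq_zero.mp key).resolve_left hD
  have h4 : Matrix.vecHead (Matrix.vecTail (Matrix.vecTail (Matrix.vecTail (Matrix.vecTail v)))) = 0 := by
    have key : (-(1/36) * (tm1 - t0)^3 * (tm2 - tm1)^2 * ((tm2 - tm1) + 3*(tm2 - t0)) : ℝ) * (Matrix.vecHead (Matrix.vecTail (Matrix.vecTail (Matrix.vecTail (Matrix.vecTail v))))) = 0 := by
      linear_combination ((1/6 : ℝ)*tm1^3*tm2 + (-1/6 : ℝ)*tm1^4 + (-1/2 : ℝ)*t0*tm1^2*tm2 + (1/2 : ℝ)*t0*tm1^3 + (1/2 : ℝ)*t0^2*tm1*tm2 + (-1/2 : ℝ)*t0^2*tm1^2 + (-1/6 : ℝ)*t0^3*tm2 + (1/6 : ℝ)*t0^3*tm1) * e0 +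
      ((1/2 : ℝ)*tm1^2*tm2 + (-1/2 : ℝ)*tm1^3 + (-1/1 : ℝ)*t0*tm1*tm2 + (1/1 : ℝ)*t0*tm1^2 + (1/2 : ℝ)*t0^2*tm2 + (-1/2 : ℝ)*t0^2*tm1) * e1 +
      ((-1/2 : ℝ)*tm1^2*tm2 + (1/2 : ℝ)*tm1^3 + (1/1 : ℝ)*t0*tm1*tm2 + (-1/1 : ℝ)*t0*tm1^2 + (-1/2 : ℝ)*t0^2*tm2 + (1/2 : ℝ)*t0^2*tm1) * e2 +
      ((1/3 : ℝ)*tm1^3*tm2 + (-1/3 : ℝ)*tm1^4 + (-1/1 : ℝ)*t0*tm1^2*tm2 + (1/1 : ℝ)*t0*tm1^3 + (1/1 : ℝ)*t0^2*tm1*tm2 + (-1/1 : ℝ)*t0^2*tm1^2 + (-1/3 : ℝ)*t0^3*tm2 + (1/3 : ℝ)*t0^3*tm1) * e3 +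
      ((1/3 : ℝ)*tm1^3 + (-1/1 : ℝ)*t0*tm1^2 + (1/1 : ℝ)*t0^2*tm1 + (-1/3 : ℝ)*t0^3) * e4 +
      ((1/6 : ℝ)*tm1^3*tm2^2 + (-1/4 : ℝ)*tm1^4*tm2 + (1/12 : ℝ)*tm1^5 + (-1/2 : ℝ)*t0*tm1^2*tm2^2 + (2/3 : ℝ)*t0*tm1^3*tm2 + (-1/6 : ℝ)*t0*tm1^4 + (1/2 : ℝ)*t0^2*tm1*tm2^2 + (-1/2 : ℝ)*t0^2*tm1^2*tm2 + (-1/6 : ℝ)*t0^3*tm2^2 + (1/6 : ℝ)*t0^3*tm1^2 + (1/12 : ℝ)*t0^4*tm2 + (-1/12 : ℝ)*t0^4*tm1) * e5 +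
      ((-1/3 : ℝ)*tm1^3 + (1/1 : ℝ)*t0*tm1^2 + (-1/1 : ℝ)*t0^2*tm1 + (1/3 : ℝ)*t0^3) * e6 +
      ((-1/12 : ℝ)*tm1^4*tm2 + (1/12 : ℝ)*tm1^5 + (1/3 : ℝ)*t0*tm1^3*tm2 + (-1/3 : ℝ)*t0*tm1^4 + (-1/2 : ℝ)*t0^2*tm1^2*tm2 + (1/2 : ℝ)*t0^2*tm1^3 + (1/3 : ℝ)*t0^3*tm1*tm2 + (-1/3 : ℝ)*t0^3*tm1^2 + (-1/12 : ℝ)*t0^4*tm2 + (1/12 : ℝ)*t0^4*tm1) * e7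
    exact (mul_eq_zero.mp key).resolve_left hD
  have h5 : Matrix.vecHead (Matrix.vecTail (Matrix.vecTail (Matrix.vecTail (Matrix.vecTail (Matrix.vecTail v))))) = 0 := by
    have key : (-(1/36) * (tm1 - t0)^3 * (tm2 - tm1)^2 * ((tm2 - tm1) + 3*(tm2 - t0)) : ℝ) * (Matrix.vecHead (Matrix.vecTail (Matrix.vecTail (Matrix.vecTail (Matrix.vecTail (Matrix.vecTail v)))))) = 0 := by
      linear_combination ((-1/6 : ℝ)*tm1^3*tm2^2 + (1/6 : ℝ)*tm1^4*tm2 + (1/2 : ℝ)*t0*tm1^2*tm2^2 + (-1/2 : ℝ)*t0*tm1^3*tm2 + (-1/2 : ℝ)*t0^2*tm1*tm2^2 + (1/2 : ℝ)*t0^2*tm1^2*tm2 + (1/6 : ℝ)*t0^3*tm2^2 + (-1/6 : ℝ)*t0^3*tm1*tm2) * e0 +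
      ((-1/2 : ℝ)*tm1^2*tm2^2 + (1/2 : ℝ)*tm1^3*tm2 + (1/1 : ℝ)*t0*tm1*tm2^2 + (-1/1 : ℝ)*t0*tm1^2*tm2 + (-1/2 : ℝ)*t0^2*tm2^2 + (1/2 : ℝ)*t0^2*tm1*tm2) * e1 +
      ((1/2 : ℝ)*tm1^2*tm2^2 + (-1/2 : ℝ)*tm1^3*tm2 + (-1/1 : ℝ)*t0*tm1*tm2^2 + (1/1 : ℝ)*t0*tm1^2*tm2 + (1/2 : ℝ)*t0^2*tm2^2 + (-1/2 : ℝ)*t0^2*tm1*tm2) * e2 +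
      ((-1/3 : ℝ)*tm1^3*tm2^2 + (1/3 : ℝ)*tm1^4*tm2 + (1/1 : ℝ)*t0*tm1^2*tm2^2 + (-1/1 : ℝ)*t0*tm1^3*tm2 + (-1/1 : ℝ)*t0^2*tm1*tm2^2 + (1/1 : ℝ)*t0^2*tm1^2*tm2 + (1/3 : ℝ)*t0^3*tm2^2 + (-1/3 : ℝ)*t0^3*tm1*tm2) * e3 +
      ((-1/3 : ℝ)*tm1^3*tm2 + (1/1 : ℝ)*t0*tm1^2*tm2 + (-1/1 : ℝ)*t0^2*tm1*tm2 + (1/3 : ℝ)*t0^3*tm2) * e4 +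
      ((-1/18 : ℝ)*tm1^3*tm2^3 + (1/12 : ℝ)*tm1^5*tm2 + (-1/36 : ℝ)*tm1^6 + (1/6 : ℝ)*t0*tm1^2*tm2^3 + (-1/6 : ℝ)*t0*tm1^4*tm2 + (-1/6 : ℝ)*t0^2*tm1*tm2^3 + (1/6 : ℝ)*t0^2*tm1^4 + (1/18 : ℝ)*t0^3*tm2^3 + (1/6 : ℝ)*t0^3*tm1^2*tm2 + (-2/9 : ℝ)*t0^3*tm1^3 + (-1/12 : ℝ)*t0^4*tm1*tm2 + (1/12 : ℝ)*t0^4*tm1^2) * e5 +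
      ((1/3 : ℝ)*tm1^3*tm2 + (-1/1 : ℝ)*t0*tm1^2*tm2 + (1/1 : ℝ)*t0^2*tm1*tm2 + (-1/3 : ℝ)*t0^3*tm2) * e6 +
      ((1/12 : ℝ)*tm1^4*tm2^2 + (-1/12 : ℝ)*tm1^5*tm2 + (-1/3 : ℝ)*t0*tm1^3*tm2^2 + (1/3 : ℝ)*t0*tm1^4*tm2 + (1/2 : ℝ)*t0^2*tm1^2*tm2^2 + (-1/2 : ℝ)*t0^2*tm1^3*tm2 + (-1/3 : ℝ)*t0^3*tm1*tm2^2 + (1/3 : ℝ)*t0^3*tm1^2*tm2 + (1/12 : ℝ)*t0^4*tm2^2 + (-1/12 : ℝ)*t0^4*tm1*tm2) * e7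
    exact (mul_eq_zero.mp key).resolve_left hD
  have h6 : Matrix.vecHead (Matrix.vecTail (Matrix.vecTail (Matrix.vecTail (Matrix.vecTail (Matrix.vecTail (Matrix.vecTail v)))))) = 0 := by
    have key : (-(1/36) * (tm1 - t0)^3 * (tm2 - tm1)^2 * ((tm2 - tm1) + 3*(tm2 - t0)) : ℝ) * (Matrix.vecHead (Matrix.vecTail (Matrix.vecTail (Matrix.vecTail (Matrix.vecTail (Matrix.vecTail (Matrix.vecTail v))))))) = 0 := by
      linear_combination ((1/18 : ℝ)*tm1^3*tm2^3 + (-1/12 : ℝ)*tm1^5*tm2 + (1/36 : ℝ)*tm1^6 + (-1/6 : ℝ)*t0*tm1^2*tm2^3 + (1/4 : ℝ)*t0*tm1^4*tm2 + (-1/12 : ℝ)*t0*tm1^5 + (1/6 : ℝ)*t0^2*tm1*tm2^3 + (-1/4 : ℝ)*t0^2*tm1^3*tm2 + (1/12 : ℝ)*t0^2*tm1^4 + (-1/18 : ℝ)*t0^3*tm2^3 + (1/12 : ℝ)*t0^3*tm1^2*tm2 + (-1/36 : ℝ)*t0^3*tm1^3) * e0 +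
      ((1/6 : ℝ)*tm1^2*tm2^3 + (-1/4 : ℝ)*tm1^4*tm2 + (1/12 : ℝ)*tm1^5 + (-1/3 : ℝ)*t0*tm1*tm2^3 + (1/2 : ℝ)*t0*tm1^3*tm2 + (-1/6 : ℝ)*t0*tm1^4 + (1/6 : ℝ)*t0^2*tm2^3 + (-1/4 : ℝ)*t0^2*tm1^2*tm2 + (1/12 : ℝ)*t0^2*tm1^3) * e1 +
      ((-1/6 : ℝ)*tm1^2*tm2^3 + (1/4 : ℝ)*tm1^4*tm2 + (-1/12 : ℝ)*tm1^5 + (1/3 : ℝ)*t0*tm1*tm2^3 + (-1/2 : ℝ)*t0*tm1^3*tm2 + (1/6 : ℝ)*t0*tm1^4 + (-1/6 : ℝ)*t0^2*tm2^3 + (1/4 : ℝ)*t0^2*tm1^2*tm2 + (-1/12 : ℝ)*t0^2*tm1^3) * e2 +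
      ((1/9 : ℝ)*tm1^3*tm2^3 + (-1/6 : ℝ)*tm1^5*tm2 + (1/18 : ℝ)*tm1^6 + (-1/3 : ℝ)*t0*tm1^2*tm2^3 + (1/2 : ℝ)*t0*tm1^4*tm2 + (-1/6 : ℝ)*t0*tm1^5 + (1/3 : ℝ)*t0^2*tm1*tm2^3 + (-1/2 : ℝ)*t0^2*tm1^3*tm2 + (1/6 : ℝ)*t0^2*tm1^4 + (-1/9 : ℝ)*t0^3*tm2^3 + (1/6 : ℝ)*t0^3*tm1^2*tm2 + (-1/18 : ℝ)*t0^3*tm1^3) * e3 +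
      ((1/4 : ℝ)*tm1^4*tm2 + (-1/12 : ℝ)*tm1^5 + (-2/3 : ℝ)*t0*tm1^3*tm2 + (1/6 : ℝ)*t0*tm1^4 + (1/2 : ℝ)*t0^2*tm1^2*tm2 + (-1/6 : ℝ)*t0^3*tm1^2 + (-1/12 : ℝ)*t0^4*tm2 + (1/12 : ℝ)*t0^4*tm1) * e4 +
      ((1/24 : ℝ)*tm1^4*tm2^3 + (-1/24 : ℝ)*tm1^5*tm2^2 + (-1/9 : ℝ)*t0*tm1^3*tm2^3 + (1/12 : ℝ)*t0*tm1^4*tm2^2 + (1/36 : ℝ)*t0*tm1^6 + (1/12 : ℝ)*t0^2*tm1^2*tm2^3 + (-1/12 : ℝ)*t0^2*tm1^5 + (-1/12 : ℝ)*t0^3*tm1^2*tm2^2 + (1/12 : ℝ)*t0^3*tm1^4 + (-1/72 : ℝ)*t0^4*tm2^3 + (1/24 : ℝ)*t0^4*tm1*tm2^2 + (-1/36 : ℝ)*t0^4*tm1^3) * e5 +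
      ((-1/4 : ℝ)*tm1^4*tm2 + (1/12 : ℝ)*tm1^5 + (2/3 : ℝ)*t0*tm1^3*tm2 + (-1/6 : ℝ)*t0*tm1^4 + (-1/2 : ℝ)*t0^2*tm1^2*tm2 + (1/6 : ℝ)*t0^3*tm1^2 + (1/12 : ℝ)*t0^4*tm2 + (-1/12 : ℝ)*t0^4*tm1) * e6 +
      ((-1/36 : ℝ)*tm1^4*tm2^3 + (1/24 : ℝ)*tm1^6*tm2 + (-1/72 : ℝ)*tm1^7 + (1/9 : ℝ)*t0*tm1^3*tm2^3 + (-1/6 : ℝ)*t0*tm1^5*tm2 + (1/18 : ℝ)*t0*tm1^6 + (-1/6 : ℝ)*t0^2*tm1^2*tm2^3 + (1/4 : ℝ)*t0^2*tm1^4*tm2 + (-1/12 : ℝ)*t0^2*tm1^5 + (1/9 : ℝ)*t0^3*tm1*tm2^3 + (-1/6 : ℝ)*t0^3*tm1^3*tm2 + (1/18 : ℝ)*t0^3*tm1^4 + (-1/36 : ℝ)*t0^4*tm2^3 + (1/24 : ℝ)*t0^4*tm1^2*tm2 + (-1/72 : ℝ)*t0^4*tm1^3) * e7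
    exact (mul_eq_zero.mp key).resolve_left hD
  have h7 : Matrix.vecHead (Matrix.vecTail (Matrix.vecTail (Matrix.vecTail (Matrix.vecTail (Matrix.vecTail (Matrix.vecTail (Matrix.vecTail v))))))) = 0 := by
    have key : (-(1/36) * (tm1 - t0)^3 * (tm2 - tm1)^2 * ((tm2 - tm1) + 3*(tm2 - t0)) : ℝ) * (Matrix.vecHead (Matrix.vecTail (Matrix.vecTail (Matrix.vecTail (Matrix.vecTail (Matrix.vecTail (Matrix.vecTail (Matrix.vecTail v)))))))) = 0 := by
      linear_combination ((-1/18 : ℝ)*tm1^4*tm2^3 + (1/12 : ℝ)*tm1^5*tm2^2 + (-1/36 : ℝ)*tm1^6*tm2 + (1/6 : ℝ)*t0*tm1^3*tm2^3 + (-1/4 : ℝ)*t0*tm1^4*tm2^2 + (1/12 : ℝ)*t0*tm1^5*tm2 + (-1/6 : ℝ)*t0^2*tm1^2*tm2^3 + (1/4 : ℝ)*t0^2*tm1^3*tm2^2 + (-1/12 : ℝ)*t0^2*tm1^4*tm2 + (1/18 : ℝ)*t0^3*tm1*tm2^3 + (-1/12 : ℝ)*t0^3*tm1^2*tm2^2 +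 (1/36 : ℝ)*t0^3*tm1^3*tm2) * e0 +
      ((-1/6 : ℝ)*tm1^3*tm2^3 + (1/4 : ℝ)*tm1^4*tm2^2 + (-1/12 : ℝ)*tm1^5*tm2 + (1/3 : ℝ)*t0*tm1^2*tm2^3 + (-1/2 : ℝ)*t0*tm1^3*tm2^2 + (1/6 : ℝ)*t0*tm1^4*tm2 + (-1/6 : ℝ)*t0^2*tm1*tm2^3 + (1/4 : ℝ)*t0^2*tm1^2*tm2^2 + (-1/12 : ℝ)*t0^2*tm1^3*tm2) * e1 +
      ((1/6 : ℝ)*tm1^3*tm2^3 + (-1/4 : ℝ)*tm1^4*tm2^2 + (1/12 : ℝ)*tm1^5*tm2 + (-1/3 : ℝ)*t0*tm1^2*tm2^3 + (1/2 : ℝ)*t0*tm1^3*tm2^2 + (-1/6 : ℝ)*t0*tm1^4*tm2 + (1/6 : ℝ)*t0^2*tm1*tm2^3 + (-1/4 : ℝ)*t0^2*tm1^2*tm2^2 + (1/12 : ℝ)*t0^2*tm1^3*tm2) * e2 +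
      ((-1/9 : ℝ)*tm1^4*tm2^3 + (1/6 : ℝ)*tm1^5*tm2^2 + (-1/18 : ℝ)*tm1^6*tm2 + (1/3 : ℝ)*t0*tm1^3*tm2^3 + (-1/2 : ℝ)*t0*tm1^4*tm2^2 + (1/6 : ℝ)*t0*tm1^5*tm2 + (-1/3 : ℝ)*t0^2*tm1^2*tm2^3 + (1/2 : ℝ)*t0^2*tm1^3*tm2^2 + (-1/6 : ℝ)*t0^2*tm1^4*tm2 + (1/9 : ℝ)*t0^3*tm1*tm2^3 + (-1/6 : ℝ)*t0^3*tm1^2*tm2^2 + (1/18 : ℝ)*t0^3*tm1^3*tm2) * e3 +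
      ((-1/12 : ℝ)*tm1^5*tm2 + (1/36 : ℝ)*tm1^6 + (1/6 : ℝ)*t0*tm1^4*tm2 + (-1/6 : ℝ)*t0^2*tm1^4 + (-1/6 : ℝ)*t0^3*tm1^2*tm2 + (2/9 : ℝ)*t0^3*tm1^3 + (1/12 : ℝ)*t0^4*tm1*tm2 + (-1/12 : ℝ)*t0^4*tm1^2) * e4 +
      ((-1/72 : ℝ)*tm1^5*tm2^3 + (1/72 : ℝ)*tm1^6*tm2^2 + (1/36 : ℝ)*t0*tm1^4*tm2^3 + (-1/36 : ℝ)*t0*tm1^6*tm2 + (-1/12 : ℝ)*t0^2*tm1^4*tm2^2 + (1/12 : ℝ)*t0^2*tm1^5*tm2 + (-1/36 : ℝ)*t0^3*tm1^2*tm2^3 + (1/9 : ℝ)*t0^3*tm1^3*tm2^2 + (-1/12 : ℝ)*t0^3*tm1^4*tm2 + (1/72 : ℝ)*t0^4*tm1*tm2^3 + (-1/24 : ℝ)*t0^4*tm1^2*tm2^2 + (1/36 : ℝ)*t0^4*tm1^3*tm2) * e5 +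
      ((-1/9 : ℝ)*tm1^3*tm2^3 + (1/4 : ℝ)*tm1^4*tm2^2 + (-1/12 : ℝ)*tm1^5*tm2 + (1/3 : ℝ)*t0*tm1^2*tm2^3 + (-2/3 : ℝ)*t0*tm1^3*tm2^2 + (1/6 : ℝ)*t0*tm1^4*tm2 + (-1/3 : ℝ)*t0^2*tm1*tm2^3 + (1/2 : ℝ)*t0^2*tm1^2*tm2^2 + (1/9 : ℝ)*t0^3*tm2^3 + (-1/6 : ℝ)*t0^3*tm1^2*tm2 + (-1/12 : ℝ)*t0^4*tm2^2 + (1/12 : ℝ)*t0^4*tm1*tm2) * e6 +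
      ((1/36 : ℝ)*tm1^5*tm2^3 + (-1/24 : ℝ)*tm1^6*tm2^2 + (1/72 : ℝ)*tm1^7*tm2 + (-1/9 : ℝ)*t0*tm1^4*tm2^3 + (1/6 : ℝ)*t0*tm1^5*tm2^2 + (-1/18 : ℝ)*t0*tm1^6*tm2 + (1/6 : ℝ)*t0^2*tm1^3*tm2^3 + (-1/4 : ℝ)*t0^2*tm1^4*tm2^2 + (1/12 : ℝ)*t0^2*tm1^5*tm2 + (-1/9 : ℝ)*t0^3*tm1^2*tm2^3 + (1/6 : ℝ)*t0^3*tm1^3*tm2^2 + (-1/18 : ℝ)*t0^3*tm1^4*tm2 + (1/36 : ℝ)*t0^4*tm1*tm2^3 + (-1/24 : ℝ)*t0^4*tm1^2*tm2^2 + (1/72 : ℝ)*t0^4*tm1^3*tm2) * e7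
    exact (mul_eq_zero.mp key).resolve_left hD
  have h8 : Matrix.vecHead (Matrix.vecTail (Matrix.vecTail (Matrix.vecTail (Matrix.vecTail (Matrix.vecTail (Matrix.vecTail (Matrix.vecTail (Matrix.vecTail v)))))))) = 0 := by
    have key : (-(1/36) * (tm1 - t0)^3 * (tm2 - tm1)^2 * ((tm2 - tm1) + 3*(tm2 - t0)) : ℝ) * (Matrix.vecHead (Matrix.vecTail (Matrix.vecTail (Matrix.vecTail (Matrix.vecTail (Matrix.vecTail (Matrix.vecTail (Matrix.vecTail (Matrix.vecTail v))))))))) = 0 := by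
      linear_combination ((-1/3 : ℝ)*tm1*tm2^3 + (1/2 : ℝ)*tm1^2*tm2^2 + (-1/6 : ℝ)*tm1^3*tm2 + (1/3 : ℝ)*t0*tm2^3 + (-1/2 : ℝ)*t0*tm1^2*tm2 + (1/6 : ℝ)*t0*tm1^3 + (-1/2 : ℝ)*t0^2*tm2^2 + (1/2 : ℝ)*t0^2*tm1*tm2 + (1/6 : ℝ)*t0^3*tm2 + (-1/6 : ℝ)*t0^3*tm1) * e0 +
      ((-1/3 : ℝ)*tm2^3 + (1/2 : ℝ)*tm1^2*tm2 + (-1/6 : ℝ)*tm1^3 + (1/1 : ℝ)*t0*tm2^2 + (-1/1 : ℝ)*t0*tm1*tm2 + (-1/2 : ℝ)*t0^2*tm2 + (1/2 : ℝ)*t0^2*tm1) * e1 +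
      ((1/3 : ℝ)*tm2^3 + (-1/2 : ℝ)*tm1^2*tm2 + (1/6 : ℝ)*tm1^3 + (-1/1 : ℝ)*t0*tm2^2 + (1/1 : ℝ)*t0*tm1*tm2 + (1/2 : ℝ)*t0^2*tm2 + (-1/2 : ℝ)*t0^2*tm1) * e2 +
      ((-1/2 : ℝ)*tm1^2*tm2^2 + (2/3 : ℝ)*tm1^3*tm2 + (-1/6 : ℝ)*tm1^4 + (1/1 : ℝ)*t0*tm1*tm2^2 + (-1/1 : ℝ)*t0*tm1^2*tm2 + (-1/2 : ℝ)*t0^2*tm2^2 + (1/2 : ℝ)*t0^2*tm1^2 + (1/3 : ℝ)*t0^3*tm2 + (-1/3 : ℝ)*t0^3*tm1) * e3 +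
      ((-1/2 : ℝ)*tm1^2*tm2 + (1/6 : ℝ)*tm1^3 + (1/1 : ℝ)*t0*tm1*tm2 + (-1/2 : ℝ)*t0^2*tm2 + (-1/2 : ℝ)*t0^2*tm1 + (1/3 : ℝ)*t0^3) * e4 +
      ((-1/12 : ℝ)*tm1^2*tm2^3 + (1/12 : ℝ)*tm1^3*tm2^2 + (1/6 : ℝ)*t0*tm1*tm2^3 + (-1/6 : ℝ)*t0*tm1^3*tm2 + (-1/12 : ℝ)*t0^2*tm2^3 + (-1/4 : ℝ)*t0^2*tm1*tm2^2 + (1/4 : ℝ)*t0^2*tm1^2*tm2 + (1/12 : ℝ)*t0^2*tm1^3 + (1/6 : ℝ)*t0^3*tm2^2 + (-1/6 : ℝ)*t0^3*tm1^2 + (-1/12 : ℝ)*t0^4*tm2 + (1/12 : ℝ)*t0^4*tm1) * e5 +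
      ((1/2 : ℝ)*tm1^2*tm2 + (-1/6 : ℝ)*tm1^3 + (-1/1 : ℝ)*t0*tm1*tm2 + (1/2 : ℝ)*t0^2*tm2 + (1/2 : ℝ)*t0^2*tm1 + (-1/3 : ℝ)*t0^3) * e6 +
      ((-1/6 : ℝ)*tm1^2*tm2^3 + (1/2 : ℝ)*tm1^3*tm2^2 + (-5/12 : ℝ)*tm1^4*tm2 + (1/12 : ℝ)*tm1^5 + (1/3 : ℝ)*t0*tm1*tm2^3 + (-1/1 : ℝ)*t0*tm1^2*tm2^2 + (2/3 : ℝ)*t0*tm1^3*tm2 + (-1/6 : ℝ)*t0^2*tm2^3 + (1/2 : ℝ)*t0^2*tm1*tm2^2 + (-1/3 : ℝ)*t0^2*tm1^3 + (-1/3 : ℝ)*t0^3*tm1*tm2 + (1/3 : ℝ)*t0^3*tm1^2 + (1/12 : ℝ)*t0^4*tm2 + (-1/12 : ℝ)*t0^4*tm1) * e7 +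
      ((1/9 : ℝ)*tm1^3*tm2^3 + (-1/4 : ℝ)*tm1^4*tm2^2 + (1/6 : ℝ)*tm1^5*tm2 + (-1/36 : ℝ)*tm1^6 + (-1/3 : ℝ)*t0*tm1^2*tm2^3 + (2/3 : ℝ)*t0*tm1^3*tm2^2 + (-1/3 : ℝ)*t0*tm1^4*tm2 + (1/3 : ℝ)*t0^2*tm1*tm2^3 + (-1/2 : ℝ)*t0^2*tm1^2*tm2^2 + (1/6 : ℝ)*t0^2*tm1^4 + (-1/9 : ℝ)*t0^3*tm2^3 + (1/3 : ℝ)*t0^3*tm1^2*tm2 + (-2/9 : ℝ)*t0^3*tm1^3 + (1/12 : ℝ)*t0^4*tm2^2 + (-1/6 : ℝ)*t0^4*tm1*tm2 + (1/12 : ℝ)*t0^4*tm1^2) * e8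
    exact (mul_eq_zero.mp key).resolve_left hD
  apply hv0
  funext i
  simp only [Pi.zero_apply]
  fin_cases i
  · exact h0
  · exact h1
  · exact h2
  · exact h3
  · exact h4
  · exact h5
  · exact h6
  · exact h7
  · exact h8
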